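/- Let T be a rooted tree and V^s a finite nonempty set of nodes. Let V^lca = {LCA(u,v) : u, v ∈ V^s}. Then |V^s| ≤ |V^lca| ≤ 2·|V^s| - 1. -/

import Mathlib

variable {V : Type} [Fintype V] [DecidableEq V]

/-- `u` is an ancestor of `v` in the tree `G` rooted at `root`:
`u` lies on the unique path from `root` to `v`. -/
def isAncestor (G : SimpleGraph V) (root u v : V) : Prop :=
  G.dist root u + G.dist u v = G.dist root v

/-- `w` is the lowest common ancestor of `u` and `v`: a common ancestor such that
every common ancestor of `u` and `v` is an ancestor of `w`. -/
def isLCA (G : SimpleGraph V) (root u v w : V) : Prop :=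
  isAncestor G root w u ∧ isAncestor G root w v ∧
    ∀ x, isAncestor G root x u → isAncestor G root x v → isAncestor G root x w

section Aux

open SimpleGraph

variable {G : SimpleGraph V} {root : V}

lemma anc_refl (v : V) : isAncestor G root v v := by
  simp [isAncestor]

lemma anc_antisymm (hc : G.Connected) {u v : V}
    (h1 : isAncestor G root u v) (h2 : isAncestor G root v u) : u = v := by
  unfold isAncestor at h1 h2
  have : G.dist u v = 0 := by omega
  exact hc.dist_eq_zero_iff.mp this

lemma anc_trans (hc : G.Connected) {a b c : V}
    (h1 : isAncestor G root a b) (h2 : isAncestor G root b c) : isAncestor G root a c := by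
  unfold isAncestor at *
  have t1 : G.dist a c ≤ G.dist a b + G.dist b c := hc.dist_triangle
  have t2 : G.dist root c ≤ G.dist root a + G.dist a c := hc.dist_triangle
  omega

lemma path_length_eq_dist (hG : G.IsTree) {u v : V} (p : G.Walk u v) (hp : p.IsPath) :
    p.length = G.dist u v := by
  obtain ⟨q, hq, hql⟩ := hG.isConnected.exists_path_of_dist u v
  obtain ⟨r, -, hr⟩ := hG.existsUnique_path u v
  rw [hr p hp, ← hr q hq]
  exact hql

lemma anc_mem_support (hG : G.IsTree) {x v : V} (p : G.Walk root v) (hp : p.IsPath)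
    (h : isAncestor G root x v) : x ∈ p.support := by
  obtain ⟨q1, hq1⟩ := (hG.isConnected root x).exists_walk_length_eq_dist
  obtain ⟨q2, hq2⟩ := (hG.isConnected x v).exists_walk_length_eq_dist
  have hlen : (q1.append q2).length = G.dist root v := by
    rw [Walk.length_append, hq1, hq2]; exact h
  have hpath : (q1.append q2).IsPath := (q1.append q2).isPath_of_length_eq_dist hlen
  obtain ⟨r, -, hr⟩ := hG.existsUnique_path root v
  have : q1.append q2 = p := by rw [hr _ hpath, ← hr p hp]
  rw [← this]
  rw [Walk.mem_support_append_iff]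
  exact Or.inl q1.end_mem_support

lemma anc_comparable (hG : G.IsTree) {x y v : V}
    (hx : isAncestor G root x v) (hy : isAncestor G root y v) :
    isAncestor G root x y ∨ isAncestor G root y x := by
  obtain ⟨p, hp, -⟩ := hG.isConnected.exists_path_of_dist root v
  have hxs : x ∈ p.support := anc_mem_support hG p hp hx
  have hys : y ∈ p.support := anc_mem_support hG p hp hy
  set q := p.takeUntil x hxs with hqdef
  have hq : q.IsPath := hp.takeUntil hxs
  by_cases hyq : y ∈ q.support
  · right
    have h1 : (q.takeUntil y hyq).length = G.dist root y :=
      path_length_eq_dist hG _ (hq.takeUntil hyq)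
    have h2 : (q.dropUntil y hyq).length = G.dist y x :=
      path_length_eq_dist hG _ (hq.dropUntil hyq)
    have h3 : q.length = G.dist root x := path_length_eq_dist hG _ hq
    have h4 : (q.takeUntil y hyq).length + (q.dropUntil y hyq).length = q.length := by
      conv_rhs => rw [← q.take_spec hyq]
      rw [Walk.length_append]
    unfold isAncestor
    omega
  · left
    set r := p.dropUntil x hxs with hrdef
    have hr : r.IsPath := hp.dropUntil hxs
    have hyr : y ∈ r.support := by
      have := hys
      rw [← p.take_spec hxs, Walk.mem_support_append_iff] at this
      exact this.resolve_left hyq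
    -- the walk from root to x and then to y is a path
    set t := r.takeUntil y hyr with htdef
    have hwsupp : (q.append t).support = q.support ++ t.support.tail :=
      Walk.support_append q t
    have hpsupp : p.support = q.support ++ r.support.tail := by
      conv_lhs => rw [← p.take_spec hxs]
      exact Walk.support_append _ _
    have hrsupp : r.support.tail = t.support.tail ++ (r.dropUntil y hyr).support.tail := by
      conv_lhs => rw [← r.take_spec hyr]
      rw [Walk.support_append, List.tail_append_of_ne_nil (Walk.support_ne_nil _)]
    have hnodup : (q.append t).support.Nodup := by
      rw [hwsupp]
      have : p.support.Nodup := hp.support_nodup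
      rw [hpsupp, hrsupp, ← List.append_assoc] at this
      exact this.of_append_left
    have hwpath : (q.append t).IsPath := (Walk.isPath_def _).mpr hnodup
    have h1 : (q.append t).length = G.dist root y := path_length_eq_dist hG _ hwpath
    have h2 : q.length = G.dist root x := path_length_eq_dist hG _ hq
    have h3 : t.length = G.dist x y := path_length_eq_dist hG _ (hr.takeUntil hyr)
    have h4 : (q.append t).length = q.length + t.length := Walk.length_append _ _
    unfold isAncestor
    omega

lemma anc_eq_of_dist_le (hc : G.Connected) {x y : V}
    (h : isAncestor G root x y) (hd : G.dist root y ≤ G.dist root x) : x = y := by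
  unfold isAncestor at h
  have : G.dist x y = 0 := by omega
  exact hc.dist_eq_zero_iff.mp this

end Aux

section LCA

open SimpleGraph Finset

variable {G : SimpleGraph V} {root : V} {lca : V → V → V}

lemma lca_self (hG : G.IsTree) (hlca : ∀ u v, isLCA G root u v (lca u v)) (v : V) :
    lca v v = v := by
  obtain ⟨h1, -, h3⟩ := hlca v v
  exact anc_antisymm hG.isConnected h1 (h3 v (anc_refl v) (anc_refl v))

lemma lca_comm (hG : G.IsTree) (hlca : ∀ u v, isLCA G root u v (lca u v)) (a b : V) :
    lca a b = lca b a := by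
  obtain ⟨h1, h2, -⟩ := hlca a b
  obtain ⟨g1, g2, g3⟩ := hlca b a
  exact anc_antisymm hG.isConnected (g3 _ h2 h1) ((hlca a b).2.2 _ g2 g1)

lemma lca_key (hG : G.IsTree) (hlca : ∀ u v, isLCA G root u v (lca u v))
    {u v0 b : V}
    (hmax : G.dist root (lca u b) ≤ G.dist root (lca u v0)) :
    lca u b = lca u v0 ∨ lca u b = lca v0 b := by
  have hc := hG.isConnected
  set w := lca u v0 with hw
  obtain ⟨hub1, hub2, hub3⟩ := hlca u b
  obtain ⟨hw1, hw2, -⟩ := hlca u v0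
  obtain ⟨hvb1, hvb2, hvb3⟩ := hlca v0 b
  rcases anc_comparable hG hub1 hw1 with hcmp | hcmp
  · -- lca u b is an ancestor of w
    have hluv0 : isAncestor G root (lca u b) v0 := anc_trans hc hcmp hw2
    have hstar : isAncestor G root (lca u b) (lca v0 b) := hvb3 _ hluv0 hub2
    rcases anc_comparable hG hvb1 hw2 with hcmp2 | hcmp2
    · -- lca v0 b ancestor of w
      right
      have : isAncestor G root (lca v0 b) u := anc_trans hc hcmp2 hw1
      exact anc_antisymm hc hstar (hub3 _ this hvb2)
    · -- w ancestor of lca v0 b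
      left
      have hwb : isAncestor G root w b := anc_trans hc hcmp2 hvb2
      exact anc_antisymm hc hcmp (hub3 _ hw1 hwb)
  · -- w ancestor of lca u b, combined with maximality: equal
    left
    exact (anc_eq_of_dist_le hc hcmp hmax).symm

lemma lca_upper (hG : G.IsTree) (hlca : ∀ u v, isLCA G root u v (lca u v)) :
    ∀ (n : ℕ) (S : Finset V), S.card = n → S.Nonempty →
      ((S ×ˢ S).image fun p => lca p.1 p.2).card ≤ 2 * S.card - 1 := by
  intro n
  induction n with
  | zero => intro S hcard hne; simp [Finset.card_eq_zero.mp hcard] at hne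
  | succ n ih =>
    intro S hcard hne
    rcases Nat.eq_zero_or_pos n with hn | hn
    · subst hn
      obtain ⟨v, hv⟩ := Finset.card_eq_one.mp hcard
      subst hv
      have : ({v} ×ˢ {v} : Finset (V × V)).image (fun p => lca p.1 p.2) = {lca v v} := by
        simp
      rw [this]
      simp
    · -- pick u of maximal depth
      obtain ⟨u, huS, humax⟩ := Finset.exists_max_image S (G.dist root) hne
      set S' := S.erase u with hS'
      have hcard' : S'.card = n := by
        rw [hS', Finset.card_erase_of_mem huS, hcard]
        omega
      have hne' : S'.Nonempty := Finset.card_pos.mp (by omega)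
      obtain ⟨v0, hv0S, hv0max⟩ :=
        Finset.exists_max_image S' (fun v => G.dist root (lca u v)) hne'
      set w := lca u v0 with hw
      have hIH := ih S' hcard' hne'
      have hsub : ((S ×ˢ S).image fun p => lca p.1 p.2) ⊆
          ((S' ×ˢ S').image fun p => lca p.1 p.2) ∪ {u, w} := by
        intro z hz
        obtain ⟨⟨a, b⟩, hab, hzeq⟩ := Finset.mem_image.mp hz
        rw [Finset.mem_product] at hab
        simp only [Finset.mem_union, Finset.mem_insert, Finset.mem_singleton]
        have key : ∀ b' ∈ S', lca u b' = w ∨ lca u b' ∈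
            ((S' ×ˢ S').image fun p => lca p.1 p.2) := by
          intro b' hb'
          rcases lca_key hG hlca (hv0max b' hb') with h | h
          · exact Or.inl h
          · refine Or.inr (Finset.mem_image.mpr ⟨(v0, b'), ?_, h.symm⟩)
            rw [Finset.mem_product]; exact ⟨hv0S, hb'⟩
        by_cases ha : a = u <;> by_cases hb : b = u
        · subst ha; subst hb
          right; left
          rw [← hzeq, lca_self hG hlca]
        · subst ha
          have hbS' : b ∈ S' := Finset.mem_erase.mpr ⟨hb, hab.2⟩
          rcases key b hbS' with h | h
          · right; right; rw [← hzeq]; exact h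
          · left; rw [← hzeq]; exact h
        · have haS' : a ∈ S' := by
            refine Finset.mem_erase.mpr ⟨?_, hab.1⟩
            exact ha
          have : z = lca u a := by rw [← hzeq, hb]; exact (lca_comm hG hlca u a).symm
          rcases key a haS' with h | h
          · right; right; rw [this]; exact h
          · left; rw [this]; exact h
        · left
          refine Finset.mem_image.mpr ⟨(a, b), ?_, hzeq⟩
          rw [Finset.mem_product]
          exact ⟨Finset.mem_erase.mpr ⟨ha, hab.1⟩, Finset.mem_erase.mpr ⟨hb, hab.2⟩⟩
      have h1 : ((S ×ˢ S).image fun p => lca p.1 p.2).card ≤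
          ((S' ×ˢ S').image fun p => lca p.1 p.2).card + 2 := by
        calc ((S ×ˢ S).image fun p => lca p.1 p.2).card
            ≤ (((S' ×ˢ S').image fun p => lca p.1 p.2) ∪ {u, w}).card :=
              Finset.card_le_card hsub
          _ ≤ ((S' ×ˢ S').image fun p => lca p.1 p.2).card + ({u, w} : Finset V).card :=
              Finset.card_union_le _ _
          _ ≤ ((S' ×ˢ S').image fun p => lca p.1 p.2).card + 2 := by
              have : ({u, w} : Finset V).card ≤ 2 := Finset.card_insert_le u {w} |>.trans (by simp)
              omega
      rw [hcard]
      omega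

end LCA

/-- `|V^s| ≤ |V^lca| ≤ 2|V^s| - 1` for the set of pairwise LCAs. -/
theorem stmt1 (G : SimpleGraph V) (hG : G.IsTree) (root : V)
    (lca : V → V → V) (hlca : ∀ u v, isLCA G root u v (lca u v))
    (Vs : Finset V) (hne : Vs.Nonempty) :
    Vs.card ≤ ((Vs ×ˢ Vs).image fun p => lca p.1 p.2).card ∧
      ((Vs ×ˢ Vs).image fun p => lca p.1 p.2).card ≤ 2 * Vs.card - 1 := by
  constructor
  · apply Finset.card_le_card
    intro v hv
    refine Finset.mem_image.mpr ⟨(v, v), ?_, lca_self hG hlca v⟩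
    rw [Finset.mem_product]
    exact ⟨hv, hv⟩
  · exact lca_upper hG hlca Vs.card Vs rfl hne
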